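/- For every e ∈ σ(H̃) ∩ I' one has dist(e, σ(H)) ≤ ‖HΠ‖² · (ℓ_{I'}/Λ_I)² · (1/d_{I'}). -/

import Mathlib

open scoped ENNReal NNReal

lemma keyInv {𝓗 : Type*} [NormedAddCommGroup 𝓗] [InnerProductSpace ℂ 𝓗] [CompleteSpace 𝓗]
    (S : 𝓗 →L[ℂ] 𝓗) (hS : IsSelfAdjoint S) {c : ℝ} (hc : 0 < c)
    (h : ∀ z ∈ spectrum ℂ S, c ≤ ‖z‖) :
    ∃ T : 𝓗 →L[ℂ] 𝓗, S * T = 1 ∧ T * S = 1 ∧ ‖T‖ ≤ 1 / c := by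
  have hunit : IsUnit S := by
    by_contra hn
    have h0 : (0:ℂ) ∈ spectrum ℂ S := (spectrum.zero_mem_iff ℂ).mpr hn
    have := h 0 h0
    simp at this; linarith
  obtain ⟨u, hu⟩ := hunit
  have hmul : S * ↑u⁻¹ = 1 := by rw [← hu]; exact u.mul_inv
  have hmul' : (↑u⁻¹ : 𝓗 →L[ℂ] 𝓗) * S = 1 := by rw [← hu]; exact u.inv_mul
  refine ⟨↑u⁻¹, hmul, hmul', ?_⟩
  have hsa : IsSelfAdjoint (↑u⁻¹ : 𝓗 →L[ℂ] 𝓗) := by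
    have h1 : star (↑u⁻¹ : 𝓗 →L[ℂ] 𝓗) * S = 1 := by
      have := congrArg star hmul
      rwa [star_mul, hS.star_eq, star_one] at this
    calc star (↑u⁻¹ : 𝓗 →L[ℂ] 𝓗) = star ↑u⁻¹ * (S * ↑u⁻¹) := by rw [hmul, mul_one]
    _ = (star ↑u⁻¹ * S) * ↑u⁻¹ := by rw [mul_assoc]
    _ = ↑u⁻¹ := by rw [h1, one_mul]
  have hbound : ∀ z ∈ spectrum ℂ (↑u⁻¹ : 𝓗 →L[ℂ] 𝓗), ‖z‖ ≤ 1 / c := by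
    intro z hz
    have hz0 : z ≠ 0 := spectrum.ne_zero_of_mem_of_unit hz
    have hzi : (↑(Units.mk0 z hz0)⁻¹ : ℂ) ∈ spectrum ℂ (↑u⁻¹⁻¹ : 𝓗 →L[ℂ] 𝓗) :=
      spectrum.inv_mem_iff.mp hz
    rw [inv_inv] at hzi
    have hc2 : c ≤ ‖z‖⁻¹ := by
      have := h _ (hu ▸ hzi)
      simpa [norm_inv] using this
    have hzpos : 0 < ‖z‖ := norm_pos_iff.mpr hz0
    rw [div_eq_mul_inv, one_mul, ← inv_inv ‖z‖]
    exact inv_anti₀ hc hc2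
  have hrad := hsa.spectralRadius_eq_nnnorm
  have hle : spectralRadius ℂ (↑u⁻¹ : 𝓗 →L[ℂ] 𝓗) ≤ ((1/c).toNNReal : ℝ≥0∞) := by
    rw [spectralRadius]
    refine iSup₂_le fun z hz => ?_
    have := hbound z hz
    exact_mod_cast ENNReal.coe_le_coe.mpr (by
      rw [← norm_toNNReal]
      exact Real.toNNReal_mono this)
  rw [hrad] at hle
  have := ENNReal.coe_le_coe.mp hle
  calc ‖(↑u⁻¹ : 𝓗 →L[ℂ] 𝓗)‖ = (‖(↑u⁻¹ : 𝓗 →L[ℂ] 𝓗)‖₊ : ℝ) := rfl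
  _ ≤ ((1/c).toNNReal : ℝ) := by exact_mod_cast this
  _ = 1 / c := Real.coe_toNNReal _ (by positivity)

lemma resBound {𝓗 : Type*} [NormedAddCommGroup 𝓗] [InnerProductSpace ℂ 𝓗] [CompleteSpace 𝓗]
    (H P : 𝓗 →L[ℂ] 𝓗) (hH : IsSelfAdjoint H) (hP : IsSelfAdjoint P) (hP2 : P * P = P)
    {Λm Λp : ℝ} {R : ℝ → 𝓗 →L[ℂ] 𝓗}
    (hadm : ∀ e ∈ Set.Ioo (-Λm) Λp,
      R e = (1 - P) * R e * (1 - P) ∧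
      R e * ((1 - P) * (H - (e : ℂ) • 1) * (1 - P)) = 1 - P ∧
      ((1 - P) * (H - (e : ℂ) • 1) * (1 - P)) * R e = 1 - P)
    (f c : ℝ) (hc : 0 < c) (hf : ∀ t : ℝ, |t| < c → f + t ∈ Set.Ioo (-Λm) Λp) :
    ‖R f‖ ≤ 1 / c := by
  set Q : 𝓗 →L[ℂ] 𝓗 := 1 - P with hQdef
  have hQP : Q * P = 0 := by rw [hQdef, sub_mul, one_mul, hP2, sub_self]
  have hPQ : P * Q = 0 := by rw [hQdef, mul_sub, mul_one, hP2, sub_self]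
  have hQ2 : Q * Q = Q := by
    rw [hQdef, sub_mul, one_mul, mul_sub, mul_one, hP2]
    abel
  have hPplusQ : P + Q = 1 := by rw [hQdef]; abel
  have hQsa : IsSelfAdjoint Q := by
    rw [hQdef, IsSelfAdjoint, star_sub, star_one, hP.star_eq]
  set A : 𝓗 →L[ℂ] 𝓗 := Q * (H - ((f:ℝ):ℂ) • 1) * Q + ((c:ℝ):ℂ) • P with hAdef
  have key : ∀ t : ℝ, |t| < c →
      (A - ((t:ℝ):ℂ) • 1) * (R (f+t) + (((c - t : ℝ):ℂ))⁻¹ • P) = 1 ∧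
      (R (f+t) + (((c - t : ℝ):ℂ))⁻¹ • P) * (A - ((t:ℝ):ℂ) • 1) = 1 := by
    intro t ht
    obtain ⟨hR1, hR2, hR3⟩ := hadm (f+t) (hf t ht)
    set Rg := R (f+t) with hRgdef
    set D : 𝓗 →L[ℂ] 𝓗 := H - ((f+t:ℝ):ℂ) • 1 with hDdef
    set s : ℂ := ((c - t : ℝ):ℂ) with hsdef
    have hs : s ≠ 0 := by
      rw [hsdef]
      simp only [ne_eq, Complex.ofReal_eq_zero]
      have : t < c := (abs_lt.mp ht).2
      intro hh; linarith
    have hPRg : P * Rg = 0 := by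
      calc P * Rg = P * (Q * Rg * Q) := by rw [← hR1]
      _ = (P * Q) * (Rg * Q) := by noncomm_ring
      _ = 0 := by rw [hPQ, zero_mul]
    have hRgP : Rg * P = 0 := by
      calc Rg * P = (Q * Rg * Q) * P := by rw [← hR1]
      _ = (Q * Rg) * (Q * P) := by noncomm_ring
      _ = 0 := by rw [hQP, mul_zero]
    have hQDQP : (Q * D * Q) * P = 0 := by
      calc (Q * D * Q) * P = (Q * D) * (Q * P) := by noncomm_ring
      _ = 0 := by rw [hQP, mul_zero]
    have hPQDQ : P * (Q * D * Q) = 0 := by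
      calc P * (Q * D * Q) = (P * Q) * (D * Q) := by noncomm_ring
      _ = 0 := by rw [hPQ, zero_mul]
    have hsplit : A - ((t:ℝ):ℂ) • 1 = Q * D * Q + s • P := by
      rw [hAdef]
      have h1 : H - ((f:ℝ):ℂ) • 1 = D + ((t:ℝ):ℂ) • 1 := by
        rw [hDdef]
        push_cast
        module
      rw [h1]
      have h2 : Q * (D + ((t:ℝ):ℂ) • 1) * Q = Q * D * Q + ((t:ℝ):ℂ) • Q := by
        rw [mul_add, add_mul, mul_smul_comm, smul_mul_assoc, mul_one, hQ2]
      rw [h2]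
      have h3 : ((t:ℝ):ℂ) • (1 : 𝓗 →L[ℂ] 𝓗) = ((t:ℝ):ℂ) • P + ((t:ℝ):ℂ) • Q := by
        rw [← smul_add, hPplusQ]
      rw [h3, hsdef]
      push_cast
      module
    constructor
    · rw [hsplit, add_mul, mul_add, mul_add]
      rw [hR3]
      rw [mul_smul_comm, hQDQP, smul_zero]
      rw [smul_mul_assoc, hPRg, smul_zero]
      rw [smul_mul_assoc, mul_smul_comm, smul_smul, hP2, mul_inv_cancel₀ hs, one_smul]
      rw [add_zero, zero_add, add_comm]
      exact hPplusQ
    · rw [hsplit, mul_add, add_mul, add_mul]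
      rw [hR2]
      rw [smul_mul_assoc, hPQDQ, smul_zero]
      rw [mul_smul_comm, hRgP, smul_zero]
      rw [smul_mul_assoc, mul_smul_comm, smul_smul, hP2, inv_mul_cancel₀ hs, one_smul]
      rw [add_zero, zero_add, add_comm]
      exact hPplusQ
  have hAsa : IsSelfAdjoint A := by
    rw [hAdef, IsSelfAdjoint, star_add, star_smul, mul_assoc, star_mul, star_mul,
      hQsa.star_eq, star_sub, star_smul, star_one, hH.star_eq]
    simp [Complex.star_def, Complex.conj_ofReal, mul_assoc, hP.star_eq]
  have hspec : ∀ z ∈ spectrum ℂ A, c ≤ ‖z‖ := by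
    intro z hz
    by_contra hlt
    push_neg at hlt
    have hzre : z = (z.re : ℂ) := hAsa.mem_spectrum_eq_re hz
    have ht : |z.re| < c := by
      have h1 : ‖z‖ = |z.re| := by rw [hzre]; exact Complex.norm_real _
      linarith
    obtain ⟨k1, k2⟩ := key z.re ht
    have hunit : IsUnit (A - ((z.re:ℝ):ℂ) • 1) :=
      ⟨⟨A - ((z.re:ℝ):ℂ) • 1, R (f + z.re) + (((c - z.re:ℝ):ℂ))⁻¹ • P, k1, k2⟩, rfl⟩
    have : IsUnit (algebraMap ℂ (𝓗 →L[ℂ] 𝓗) z - A) := by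
      have hzt : algebraMap ℂ (𝓗 →L[ℂ] 𝓗) z - A = -(A - ((z.re:ℝ):ℂ) • 1) := by
        rw [Algebra.algebraMap_eq_smul_one, neg_sub, ← hzre]
      rw [hzt]
      exact hunit.neg
    exact spectrum.mem_iff.mp hz this
  obtain ⟨T, hT1, hT2, hT3⟩ := keyInv A hAsa hc hspec
  obtain ⟨k1, k2⟩ := key 0 (by simpa using hc)
  simp only [add_zero, sub_zero, Complex.ofReal_zero, zero_smul] at k1 k2
  have hTeq : T = R f + (((c:ℝ):ℂ))⁻¹ • P := by
    calc T = T * (A * (R f + (((c:ℝ):ℂ))⁻¹ • P)) := by rw [k1, mul_one]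
    _ = (T * A) * (R f + (((c:ℝ):ℂ))⁻¹ • P) := by rw [mul_assoc]
    _ = R f + (((c:ℝ):ℂ))⁻¹ • P := by rw [hT2, one_mul]
  obtain ⟨hR1, _, _⟩ := hadm f (by simpa using hf 0 (by simpa using hc))
  have hfin : Q * T * Q = R f := by
    rw [hTeq, mul_add, add_mul]
    rw [mul_smul_comm, smul_mul_assoc]
    have : Q * P * Q = 0 := by rw [hQP, zero_mul]
    rw [this, smul_zero, add_zero, ← hR1]
  have hQn : ‖Q‖ ≤ 1 := by
    have h1 : ‖star Q * Q‖ = ‖Q‖ * ‖Q‖ := CStarRing.norm_star_mul_self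
    rw [hQsa.star_eq, hQ2] at h1
    nlinarith [norm_nonneg Q]
  have hle : ‖R f‖ ≤ ‖T‖ := by
    rw [← hfin]
    calc ‖Q * T * Q‖ ≤ ‖Q * T‖ * ‖Q‖ := norm_mul_le _ _
    _ ≤ (‖Q‖ * ‖T‖) * ‖Q‖ := by
        have h' := norm_mul_le Q T
        nlinarith [norm_nonneg Q, norm_nonneg T, norm_nonneg (Q*T)]
    _ ≤ ‖T‖ := by nlinarith [hQn, norm_nonneg Q, norm_nonneg T,
        mul_nonneg (norm_nonneg Q) (norm_nonneg T)]
  linarith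

lemma sand {A : Type*} [Ring A] [StarRing A] (x m : A) (hm : star m = m) :
    star (x * m * star x) = x * m * star x := by
  rw [star_mul, star_mul, star_star, hm, mul_assoc]

set_option maxHeartbeats 2000000 in
theorem stmt10 {𝓗 : Type*} [NormedAddCommGroup 𝓗] [InnerProductSpace ℂ 𝓗] [CompleteSpace 𝓗]
    (H P : 𝓗 →L[ℂ] 𝓗) (hH : IsSelfAdjoint H)
    (hP : IsSelfAdjoint P) (hP2 : P * P = P)
    (K : Submodule ℂ 𝓗) (hK : ∀ x : 𝓗, x ∈ K ↔ P x = x)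
    (Λm Λp : ℝ) (hΛm : 0 < Λm) (hΛp : 0 < Λp)
    (R : ℝ → 𝓗 →L[ℂ] 𝓗)
    (hadm : ∀ e ∈ Set.Ioo (-Λm) Λp,
      R e = (1 - P) * R e * (1 - P) ∧
      R e * ((1 - P) * (H - (e : ℂ) • 1) * (1 - P)) = 1 - P ∧
      ((1 - P) * (H - (e : ℂ) • 1) * (1 - P)) * R e = 1 - P)
    (Z : 𝓗 →L[ℂ] 𝓗) (hZpos : Z.IsPositive) (hZsupp : Z = P * Z * P)
    (hZsq : Z * Z * (P + P * H * (1 - P) * (R 0 * R 0) * (1 - P) * H * P) = P)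
    (Ht : K →L[ℂ] K)
    (hHt : ∀ x : K, (Ht x : 𝓗) =
      (Z * (P * H * P - P * H * (1 - P) * R 0 * (1 - P) * H * P) * Z) (x : 𝓗))
    (a b : ℝ) (ha : a < 0) (hb : 0 < b)
    (hsub : -Λm < a) (hsub' : b < Λp) :
    ∀ e ∈ Set.Icc a b, (e : ℂ) ∈ spectrum ℂ Ht →
      Metric.infDist ((e : ℝ) : ℂ) (spectrum ℂ H) ≤
        ‖H * P‖ ^ 2 * (max (-a) b / min Λm Λp) ^ 2 * (1 / min (a + Λm) (Λp - b)) := by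
  intro e he hespec
  by_contra hcon
  push_neg at hcon
  -- basic projections
  set Q : 𝓗 →L[ℂ] 𝓗 := 1 - P with hQdef
  have hQP : Q * P = 0 := by rw [hQdef, sub_mul, one_mul, hP2, sub_self]
  have hPQ : P * Q = 0 := by rw [hQdef, mul_sub, mul_one, hP2, sub_self]
  have hQ2 : Q * Q = Q := by
    rw [hQdef, sub_mul, one_mul, mul_sub, mul_one, hP2]; abel
  have hPplusQ : P + Q = 1 := by rw [hQdef]; abel
  have hQsa : IsSelfAdjoint Q := by
    rw [hQdef, IsSelfAdjoint, star_sub, star_one, hP.star_eq]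
  clear_value Q
  set R0 : 𝓗 →L[ℂ] 𝓗 := R 0 with hR0def
  obtain ⟨h01, h02, h03⟩ := hadm 0 ⟨by linarith, by linarith⟩
  simp only [Complex.ofReal_zero, zero_smul, sub_zero] at h02 h03
  rw [← hR0def] at h01 h02 h03
  have hmIoo : ∀ t : ℝ, |t| < min Λm Λp → (0:ℝ) + t ∈ Set.Ioo (-Λm) Λp := by
    intro t ht
    obtain ⟨ht1, ht2⟩ := abs_lt.mp ht
    constructor
    · have := min_le_left Λm Λp; simp; linarith
    · have := min_le_right Λm Λp; linarith
  have heIoo : e ∈ Set.Ioo (-Λm) Λp := ⟨lt_of_lt_of_le hsub he.1, lt_of_le_of_lt he.2 hsub'⟩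
  obtain ⟨he1, he2, he3⟩ := hadm e heIoo
  set Re : 𝓗 →L[ℂ] 𝓗 := R e with hRedef
  set De : 𝓗 →L[ℂ] 𝓗 := H - ((e:ℝ):ℂ) • 1 with hDedef
  clear_value De
  -- absorptions
  have hQR0 : Q * R0 = R0 := by
    calc Q * R0 = Q * (Q * R0 * Q) := by rw [← h01]
    _ = (Q * Q) * R0 * Q := by noncomm_ring
    _ = Q * R0 * Q := by rw [hQ2]
    _ = R0 := h01.symm
  have hR0Q : R0 * Q = R0 := by
    calc R0 * Q = (Q * R0 * Q) * Q := by rw [← h01]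
    _ = Q * R0 * (Q * Q) := by noncomm_ring
    _ = Q * R0 * Q := by rw [hQ2]
    _ = R0 := h01.symm
  have hQRe : Q * Re = Re := by
    calc Q * Re = Q * (Q * Re * Q) := by rw [← he1]
    _ = (Q * Q) * Re * Q := by noncomm_ring
    _ = Q * Re * Q := by rw [hQ2]
    _ = Re := he1.symm
  have hReQ : Re * Q = Re := by
    calc Re * Q = (Q * Re * Q) * Q := by rw [← he1]
    _ = Q * Re * (Q * Q) := by noncomm_ring
    _ = Q * Re * Q := by rw [hQ2]
    _ = Re := he1.symm
  have hPR0 : P * R0 = 0 := by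
    calc P * R0 = P * (Q * R0) := by rw [hQR0]
    _ = (P * Q) * R0 := by noncomm_ring
    _ = 0 := by rw [hPQ, zero_mul]
  have hR0P : R0 * P = 0 := by
    calc R0 * P = (R0 * Q) * P := by rw [hR0Q]
    _ = R0 * (Q * P) := by noncomm_ring
    _ = 0 := by rw [hQP, mul_zero]
  have hPRe : P * Re = 0 := by
    calc P * Re = P * (Q * Re) := by rw [hQRe]
    _ = (P * Q) * Re := by noncomm_ring
    _ = 0 := by rw [hPQ, zero_mul]
  have hReP : Re * P = 0 := by
    calc Re * P = (Re * Q) * P := by rw [hReQ]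
    _ = Re * (Q * P) := by noncomm_ring
    _ = 0 := by rw [hQP, mul_zero]
  -- star of R0
  have hR0sa : star R0 = R0 := by
    have hs2 : (Q * H * Q) * star R0 = Q := by
      have := congrArg star h02
      rwa [star_mul, star_mul, star_mul, hQsa.star_eq, hH.star_eq, mul_assoc, mul_assoc] at this
    have hQsR : Q * star R0 = star R0 := by
      have := congrArg star hR0Q
      rwa [star_mul, hQsa.star_eq] at this
    have : R0 = star R0 := by
      calc R0 = R0 * Q := hR0Q.symm
      _ = R0 * ((Q * H * Q) * star R0) := by rw [hs2]
      _ = (R0 * (Q * H * Q)) * star R0 := by noncomm_ring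
      _ = Q * star R0 := by rw [h02]
      _ = star R0 := hQsR
    exact this.symm
  -- star/Z/Y facts
  have hstar3 : star (P * H * Q) = Q * H * P := by
    rw [star_mul, star_mul, hQsa.star_eq, hH.star_eq, hP.star_eq, mul_assoc]
  have hRRsa : star (R0 * R0) = R0 * R0 := by rw [star_mul, hR0sa]
  set Y : 𝓗 →L[ℂ] 𝓗 := P + P * H * Q * (R0 * R0) * Q * H * P with hYdef
  set NN : 𝓗 →L[ℂ] 𝓗 := P * H * P - P * H * Q * R0 * Q * H * P with hNNdef
  clear_value Y NN
  have hYsa : IsSelfAdjoint Y := by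
    rw [hYdef, IsSelfAdjoint, star_add, hP.star_eq]
    congr 1
    have h1 : P * H * Q * (R0 * R0) * Q * H * P = (P*H*Q) * (R0*R0) * star (P*H*Q) := by
      rw [hstar3]; noncomm_ring
    rw [h1]
    exact sand _ _ hRRsa
  have hZsa : star Z = Z := hZpos.isSelfAdjoint.star_eq
  have hPZ : P * Z = Z := by
    calc P * Z = P * (P * Z * P) := by rw [← hZsupp]
    _ = (P * P) * (Z * P) := by noncomm_ring
    _ = P * Z * P := by rw [hP2]; noncomm_ring
    _ = Z := hZsupp.symm
  have hZP : Z * P = Z := by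
    calc Z * P = (P * Z * P) * P := by rw [← hZsupp]
    _ = P * Z * (P * P) := by noncomm_ring
    _ = P * Z * P := by rw [hP2]
    _ = Z := hZsupp.symm
  have hPY : P * Y = Y := by
    rw [hYdef, mul_add]
    have h1 : P * (P * H * Q * (R0 * R0) * Q * H * P)
        = (P * P) * (H * Q * (R0 * R0) * Q * H * P) := by noncomm_ring
    rw [h1, hP2]
    have h2 : P * (H * Q * (R0 * R0) * Q * H * P)
        = P * H * Q * (R0 * R0) * Q * H * P := by noncomm_ring
    rw [h2]
  have hYP : Y * P = Y := by
    rw [hYdef, add_mul]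
    have h1 : (P * H * Q * (R0 * R0) * Q * H * P) * P
        = (P * H * Q * (R0 * R0) * Q * H) * (P * P) := by noncomm_ring
    rw [h1, hP2]
  have hYZZ : Y * (Z * Z) = P := by
    have hst := congrArg star hZsq
    rwa [star_mul, star_mul, hYsa.star_eq, hZsa, hP.star_eq] at hst
  have ha1 : Z * (Z * (Y * Z)) = Z := by
    calc Z * (Z * (Y * Z)) = (Z * Z * Y) * Z := by noncomm_ring
    _ = P * Z := by rw [hZsq]
    _ = Z := hPZ
  have hZYZ : Z * (Y * Z) = P := by
    have e0 : P * (Z * (Y * Z)) = Z * (Y * Z) := by rw [← mul_assoc, hPZ]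
    calc Z * (Y * Z) = P * (Z * (Y * Z)) := e0.symm
    _ = (Y * (Z * Z)) * (Z * (Y * Z)) := by rw [hYZZ]
    _ = (Y * Z) * (Z * (Z * (Y * Z))) := by noncomm_ring
    _ = (Y * Z) * Z := by rw [ha1]
    _ = Y * (Z * Z) := by noncomm_ring
    _ = P := hYZZ
  -- resolvent expansion
  have c3 : Q * H * Q - Q * De * Q = ((e:ℝ):ℂ) • Q := by
    rw [hDedef]
    rw [mul_sub]
    rw [sub_mul]
    rw [mul_smul_comm]
    rw [smul_mul_assoc, mul_one, hQ2]
    abel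
  have step1 : Re - R0 = ((e:ℝ):ℂ) • (Re * R0) := by
    have l1 : Re * ((Q * H * Q) * R0) = Re := by
      rw [show (Q * H * Q) * R0 = Q * H * Q * R0 from rfl, h03, hReQ]
    have l2 : Re * ((Q * De * Q) * R0) = R0 := by
      calc Re * ((Q * De * Q) * R0) = (Re * (Q * De * Q)) * R0 := by noncomm_ring
      _ = Q * R0 := by rw [he2]
      _ = R0 := hQR0
    calc Re - R0 = Re * ((Q * H * Q) * R0) - Re * ((Q * De * Q) * R0) := by rw [l1, l2]
    _ = Re * ((Q * H * Q - Q * De * Q) * R0) := by rw [← mul_sub, ← sub_mul]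
    _ = Re * ((((e:ℝ):ℂ) • Q) * R0) := by rw [c3]
    _ = ((e:ℝ):ℂ) • (Re * (Q * R0)) := by rw [smul_mul_assoc, mul_smul_comm]
    _ = ((e:ℝ):ℂ) • (Re * R0) := by rw [hQR0]
  have step0 : Re = R0 + ((e:ℝ):ℂ) • (Re * R0) := by
    rw [← step1]; abel
  have step2 : Re * R0 = R0 * R0 + ((e:ℝ):ℂ) • (Re * (R0 * R0)) := by
    calc Re * R0 = (R0 + ((e:ℝ):ℂ) • (Re * R0)) * R0 := by rw [← step0]
    _ = R0 * R0 + ((e:ℝ):ℂ) • ((Re * R0) * R0) := by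
        rw [add_mul, smul_mul_assoc]
    _ = R0 * R0 + ((e:ℝ):ℂ) • (Re * (R0 * R0)) := by rw [mul_assoc]
  have hexp : Re = R0 + ((e:ℝ):ℂ) • (R0 * R0)
      + (((e:ℝ):ℂ) * ((e:ℝ):ℂ)) • (Re * (R0 * R0)) := by
    calc Re = R0 + ((e:ℝ):ℂ) • (Re * R0) := step0
    _ = R0 + ((e:ℝ):ℂ) • (R0 * R0 + ((e:ℝ):ℂ) • (Re * (R0 * R0))) := by rw [← step2]
    _ = _ := by rw [smul_add, smul_smul]; abel
  -- self-adjointness of De, Re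
  have hDesa : star De = De := by
    rw [hDedef, star_sub, star_smul, star_one, hH.star_eq, Complex.star_def, Complex.conj_ofReal]
  have hResa : star Re = Re := by
    have hs2 : (Q * De * Q) * star Re = Q := by
      have := congrArg star he2
      rwa [star_mul, star_mul, star_mul, hQsa.star_eq, hDesa, mul_assoc, mul_assoc] at this
    have hQsR : Q * star Re = star Re := by
      have := congrArg star hReQ
      rwa [star_mul, hQsa.star_eq] at this
    have hfin : Re = star Re := by
      calc Re = Re * Q := hReQ.symm
      _ = Re * ((Q * De * Q) * star Re) := by rw [hs2]
      _ = (Re * (Q * De * Q)) * star Re := by noncomm_ring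
      _ = Q * star Re := by rw [he2]
      _ = star Re := hQsR
    exact hfin.symm
  have step1' : Re - R0 = ((e:ℝ):ℂ) • (R0 * Re) := by
    have l1 : (R0 * (Q * H * Q)) * Re = Re := by rw [h02, hQRe]
    have l2 : R0 * ((Q * De * Q) * Re) = R0 := by rw [he3, hR0Q]
    calc Re - R0 = (R0 * (Q * H * Q)) * Re - R0 * ((Q * De * Q) * Re) := by rw [l1, l2]
    _ = R0 * ((Q * H * Q) * Re) - R0 * ((Q * De * Q) * Re) := by rw [mul_assoc]
    _ = R0 * ((Q * H * Q - Q * De * Q) * Re) := by rw [← mul_sub, ← sub_mul]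
    _ = R0 * ((((e:ℝ):ℂ) • Q) * Re) := by rw [c3]
    _ = ((e:ℝ):ℂ) • (R0 * (Q * Re)) := by rw [smul_mul_assoc, mul_smul_comm]
    _ = ((e:ℝ):ℂ) • (R0 * Re) := by rw [hQRe]
  have hcomm : Re * R0 = R0 * Re := by
    rcases eq_or_ne ((e:ℝ):ℂ) 0 with h0 | h0
    · have hRe0 : Re = R0 := by
        have hh := step1
        rw [h0, zero_smul, sub_eq_zero] at hh
        exact hh
      rw [hRe0]
    · have h5 : ((e:ℝ):ℂ) • (Re * R0) = ((e:ℝ):ℂ) • (R0 * Re) := by rw [← step1, ← step1']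
      exact smul_right_injective _ h0 h5
  -- numerics
  have hadm' : ∀ f ∈ Set.Ioo (-Λm) Λp,
      R f = (1 - P) * R f * (1 - P) ∧
      R f * ((1 - P) * (H - (f : ℂ) • 1) * (1 - P)) = 1 - P ∧
      ((1 - P) * (H - (f : ℂ) • 1) * (1 - P)) * R f = 1 - P := by
    intro f hf
    have := hadm f hf
    rwa [hQdef] at this
  set m : ℝ := min Λm Λp with hmdef
  set d : ℝ := min (a + Λm) (Λp - b) with hddef
  set L : ℝ := max (-a) b with hLdef
  have hm0 : 0 < m := lt_min hΛm hΛp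
  have hd0 : 0 < d := lt_min (by linarith) (by linarith)
  have hL0 : 0 < L := lt_max_iff.mpr (Or.inr hb)
  have heL : |e| ≤ L := by
    rw [abs_le]
    constructor
    · have h1 : -a ≤ L := le_max_left _ _
      linarith [he.1]
    · have h1 : b ≤ L := le_max_right _ _
      linarith [he.2]
  have hR0n : ‖R0‖ ≤ 1 / m := by
    rw [hR0def]
    exact resBound H P hH hP hP2 hadm' 0 m hm0 hmIoo
  have hRen : ‖Re‖ ≤ 1 / d := by
    rw [hRedef]
    refine resBound H P hH hP hP2 hadm' e d hd0 ?_
    intro t ht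
    obtain ⟨ht1, ht2⟩ := abs_lt.mp ht
    have hd1 : d ≤ a + Λm := min_le_left _ _
    have hd2 : d ≤ Λp - b := min_le_right _ _
    constructor
    · have := he.1; linarith
    · have := he.2; linarith
  set EE : 𝓗 →L[ℂ] 𝓗 :=
    (((e:ℝ):ℂ) * ((e:ℝ):ℂ)) • (P * (H * (Re * (R0 * (R0 * (H * P)))))) with hEEdef
  clear_value EE
  have hPHn : ‖P * H‖ = ‖H * P‖ := by
    have h1 : P * H = star (H * P) := by rw [star_mul, hH.star_eq, hP.star_eq]
    rw [h1, norm_star]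
  have hEEn : ‖EE‖ ≤ ‖H * P‖ ^ 2 * (L / m) ^ 2 * (1 / d) := by
    have hbody : P * (H * (Re * (R0 * (R0 * (H * P)))))
        = (((P * H) * Re) * R0) * (R0 * (H * P)) := by noncomm_ring
    have n0 : ‖((e:ℝ):ℂ) * ((e:ℝ):ℂ)‖ = |e| * |e| := by
      simp [Complex.norm_real, Real.norm_eq_abs]
    have n1 : ‖(((P * H) * Re) * R0) * (R0 * (H * P))‖
        ≤ ((‖P * H‖ * ‖Re‖) * ‖R0‖) * (‖R0‖ * ‖H * P‖) := by
      have a1 : ‖(P * H) * Re‖ ≤ ‖P * H‖ * ‖Re‖ := norm_mul_le _ _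
      have a2 : ‖((P * H) * Re) * R0‖ ≤ (‖P * H‖ * ‖Re‖) * ‖R0‖ :=
        le_trans (norm_mul_le _ _) (mul_le_mul_of_nonneg_right a1 (norm_nonneg _))
      have a3 : ‖R0 * (H * P)‖ ≤ ‖R0‖ * ‖H * P‖ := norm_mul_le _ _
      exact le_trans (norm_mul_le _ _)
        (mul_le_mul a2 a3 (norm_nonneg _) (by positivity))
    have n2 : ((‖P * H‖ * ‖Re‖) * ‖R0‖) * (‖R0‖ * ‖H * P‖)
        ≤ ((‖H * P‖ * (1/d)) * (1/m)) * ((1/m) * ‖H * P‖) := by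
      rw [hPHn]
      have b1 : ‖H * P‖ * ‖Re‖ ≤ ‖H * P‖ * (1/d) :=
        mul_le_mul_of_nonneg_left hRen (norm_nonneg _)
      have b2 : (‖H * P‖ * ‖Re‖) * ‖R0‖ ≤ (‖H * P‖ * (1/d)) * (1/m) :=
        mul_le_mul b1 hR0n (norm_nonneg _) (by positivity)
      have b3 : ‖R0‖ * ‖H * P‖ ≤ (1/m) * ‖H * P‖ :=
        mul_le_mul_of_nonneg_right hR0n (norm_nonneg _)
      exact mul_le_mul b2 b3 (by positivity) (by positivity)
    have n3 : |e| * |e| ≤ L * L := by nlinarith [abs_nonneg e]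
    have n4 : ‖EE‖ ≤ (L * L) * (((‖H * P‖ * (1/d)) * (1/m)) * ((1/m) * ‖H * P‖)) := by
      rw [hEEdef, norm_smul, hbody, n0]
      exact mul_le_mul n3 (le_trans n1 n2) (norm_nonneg _) (by positivity)
    refine le_trans n4 (le_of_eq ?_)
    field_simp
  have hδ0 : 0 ≤ ‖H * P‖ ^ 2 * (L / m) ^ 2 * (1 / d) := by positivity
  set c0 : ℝ := Metric.infDist ((e:ℝ):ℂ) (spectrum ℂ H) with hc0def
  have hc0 : 0 < c0 := lt_of_le_of_lt hδ0 hcon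
  have hSsa : IsSelfAdjoint (H - ((e:ℝ):ℂ) • 1) := by
    rw [IsSelfAdjoint, ← hDedef]
    exact hDesa
  have hSspec : ∀ z ∈ spectrum ℂ (H - ((e:ℝ):ℂ) • 1), c0 ≤ ‖z‖ := by
    intro z hz
    have hz' : z + ((e:ℝ):ℂ) ∈ spectrum ℂ H := by
      have heq : (algebraMap ℂ (𝓗 →L[ℂ] 𝓗)) (z + ((e:ℝ):ℂ)) - H
          = (algebraMap ℂ (𝓗 →L[ℂ] 𝓗)) z - (H - ((e:ℝ):ℂ) • 1) := by
        rw [Algebra.algebraMap_eq_smul_one, Algebra.algebraMap_eq_smul_one, add_smul]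
        abel
      rw [spectrum.mem_iff, heq, ← spectrum.mem_iff]
      exact hz
    have hdist : Metric.infDist ((e:ℝ):ℂ) (spectrum ℂ H) ≤ dist ((e:ℝ):ℂ) (z + ((e:ℝ):ℂ)) :=
      Metric.infDist_le_dist_of_mem hz'
    rw [dist_eq_norm] at hdist
    have hne : ((e:ℝ):ℂ) - (z + ((e:ℝ):ℂ)) = -z := by ring
    rw [hne, norm_neg] at hdist
    exact le_trans (le_of_eq hc0def) hdist
  obtain ⟨T, hT1, hT2, hT3⟩ := keyInv (H - ((e:ℝ):ℂ) • 1) hSsa hc0 hSspec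
  set G : 𝓗 →L[ℂ] 𝓗 := H - ((e:ℝ):ℂ) • 1 + EE with hGdef
  clear_value G
  have hGfact : G = (H - ((e:ℝ):ℂ) • 1) * (1 + T * EE) := by
    rw [hGdef, mul_add, mul_one, ← mul_assoc, hT1, one_mul]
  have hTEn : ‖-(T * EE)‖ < 1 := by
    rw [norm_neg]
    calc ‖T * EE‖ ≤ ‖T‖ * ‖EE‖ := norm_mul_le _ _
    _ ≤ (1/c0) * (‖H * P‖ ^ 2 * (L / m) ^ 2 * (1 / d)) :=
        mul_le_mul hT3 hEEn (norm_nonneg _) (by positivity)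
    _ < 1 := by
        rw [div_mul_eq_mul_div, one_mul, div_lt_one hc0]
        exact hcon
  have hGunit : IsUnit G := by
    rw [hGfact]
    have h1 : IsUnit (H - ((e:ℝ):ℂ) • 1) := ⟨⟨H - ((e:ℝ):ℂ) • 1, T, hT1, hT2⟩, rfl⟩
    refine h1.mul ?_
    exact ⟨Units.oneSub (-(T * EE)) hTEn, by rw [Units.val_oneSub, sub_neg_eq_add]⟩
  obtain ⟨uG, huG⟩ := hGunit
  set Gi : 𝓗 →L[ℂ] 𝓗 := ↑uG⁻¹ with hGidef
  have hGi1 : G * Gi = 1 := by rw [hGidef, ← huG]; exact uG.mul_inv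
  have hGi2 : Gi * G = 1 := by rw [hGidef, ← huG]; exact uG.inv_mul
  -- EE algebra facts
  have hEEP : EE * P = EE := by
    rw [hEEdef, smul_mul_assoc]
    congr 1
    calc (P * (H * (Re * (R0 * (R0 * (H * P)))))) * P
        = P * (H * (Re * (R0 * (R0 * (H * (P * P)))))) := by noncomm_ring
    _ = P * (H * (Re * (R0 * (R0 * (H * P))))) := by rw [hP2]
  have hPEE : P * EE = EE := by
    rw [hEEdef, mul_smul_comm]
    congr 1
    calc P * (P * (H * (Re * (R0 * (R0 * (H * P))))))
        = (P * P) * (H * (Re * (R0 * (R0 * (H * P))))) := by noncomm_ring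
    _ = P * (H * (Re * (R0 * (R0 * (H * P))))) := by rw [hP2]
  have hQEE : Q * EE = 0 := by
    rw [hEEdef, mul_smul_comm]
    have h1 : Q * (P * (H * (Re * (R0 * (R0 * (H * P))))))
        = (Q * P) * (H * (Re * (R0 * (R0 * (H * P))))) := by noncomm_ring
    rw [h1, hQP, zero_mul, smul_zero]
  have hEEQ : EE * Q = 0 := by
    rw [hEEdef, smul_mul_assoc]
    have h1 : (P * (H * (Re * (R0 * (R0 * (H * P)))))) * Q
        = P * (H * (Re * (R0 * (R0 * (H * (P * Q)))))) := by noncomm_ring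
    rw [h1, hPQ]
    have h2 : P * (H * (Re * (R0 * (R0 * (H * (0 : 𝓗 →L[ℂ] 𝓗)))))) = 0 := by
      simp [mul_zero]
    rw [h2, smul_zero]
  have hEERe : EE * Re = 0 := by
    rw [hEEdef, smul_mul_assoc]
    have h1 : (P * (H * (Re * (R0 * (R0 * (H * P)))))) * Re
        = P * (H * (Re * (R0 * (R0 * (H * (P * Re)))))) := by noncomm_ring
    rw [h1, hPRe]
    have h2 : P * (H * (Re * (R0 * (R0 * (H * (0 : 𝓗 →L[ℂ] 𝓗)))))) = 0 := by
      simp [mul_zero]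
    rw [h2, smul_zero]
  have hReEE : Re * EE = 0 := by
    rw [hEEdef, mul_smul_comm]
    have h1 : Re * (P * (H * (Re * (R0 * (R0 * (H * P))))))
        = (Re * P) * (H * (Re * (R0 * (R0 * (H * P))))) := by noncomm_ring
    rw [h1, hReP, zero_mul, smul_zero]
  have hEEsa : star EE = EE := by
    rw [hEEdef, star_smul]
    have hsc : star (((e:ℝ):ℂ) * ((e:ℝ):ℂ)) = ((e:ℝ):ℂ) * ((e:ℝ):ℂ) := by
      simp [Complex.star_def, map_mul, Complex.conj_ofReal]
    rw [hsc]
    congr 1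
    have hRResa : star (Re * (R0 * R0)) = Re * (R0 * R0) := by
      rw [star_mul, hResa, hRRsa]
      calc (R0 * R0) * Re = R0 * (R0 * Re) := by rw [mul_assoc]
      _ = R0 * (Re * R0) := by rw [hcomm]
      _ = (R0 * Re) * R0 := by rw [← mul_assoc]
      _ = (Re * R0) * R0 := by rw [hcomm]
      _ = Re * (R0 * R0) := by rw [mul_assoc]
    have hb : P * (H * (Re * (R0 * (R0 * (H * P)))))
        = (P * H) * (Re * (R0 * R0)) * star (P * H) := by
      rw [star_mul, hH.star_eq, hP.star_eq]
      noncomm_ring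
    rw [hb]
    exact sand _ _ hRResa
  -- G facts
  have hGDe : G = De + EE := by rw [hGdef, hDedef]
  have hGsa : star G = G := by
    rw [hGdef, star_add, hEEsa, star_sub, star_smul, star_one, hH.star_eq,
      Complex.star_def, Complex.conj_ofReal]
  have hQGQ : Q * G * Q = Q * De * Q := by
    calc Q * G * Q = Q * (De + EE) * Q := by rw [hGDe]
    _ = Q * De * Q + Q * EE * Q := by noncomm_ring
    _ = Q * De * Q := by rw [show Q * EE * Q = 0 from by rw [hQEE, zero_mul], add_zero]
  have hQGQRe : (Q * G * Q) * Re = Q := by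
    rw [hQGQ]; exact he3
  have hReQGQ : Re * (Q * G * Q) = Q := by
    rw [hQGQ]; exact he2
  have hQGRe : Q * (G * Re) = Q := by
    calc Q * (G * Re) = Q * (G * (Q * Re)) := by rw [hQRe]
    _ = (Q * G * Q) * Re := by noncomm_ring
    _ = Q := hQGQRe
  have hReGQ : Re * (G * Q) = Q := by
    calc Re * (G * Q) = (Re * Q) * (G * Q) := by rw [hReQ]
    _ = Re * (Q * G * Q) := by noncomm_ring
    _ = Q := hReQGQ
  -- NN, Y, Sc facts
  set Sc : 𝓗 →L[ℂ] 𝓗 := NN - ((e:ℝ):ℂ) • Y with hScdef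
  clear_value Sc
  have hPNN : P * NN = NN := by
    rw [hNNdef, mul_sub]
    have t1 : P * (P * H * P) = P * H * P := by
      calc P * (P * H * P) = (P * P) * (H * P) := by noncomm_ring
      _ = P * (H * P) := by rw [hP2]
      _ = P * H * P := by noncomm_ring
    have t2 : P * (P * H * Q * R0 * Q * H * P) = P * H * Q * R0 * Q * H * P := by
      calc P * (P * H * Q * R0 * Q * H * P)
          = (P * P) * (H * Q * R0 * Q * H * P) := by noncomm_ring
      _ = P * (H * Q * R0 * Q * H * P) := by rw [hP2]
      _ = P * H * Q * R0 * Q * H * P := by noncomm_ring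
    rw [t1, t2]
  have hNNP : NN * P = NN := by
    rw [hNNdef, sub_mul]
    have t1 : (P * H * P) * P = P * H * P := by
      calc (P * H * P) * P = (P * H) * (P * P) := by noncomm_ring
      _ = P * H * P := by rw [hP2]
    have t2 : (P * H * Q * R0 * Q * H * P) * P = P * H * Q * R0 * Q * H * P := by
      calc (P * H * Q * R0 * Q * H * P) * P
          = (P * H * Q * R0 * Q * H) * (P * P) := by noncomm_ring
      _ = P * H * Q * R0 * Q * H * P := by rw [hP2]
    rw [t1, t2]
  have hPSc : P * Sc = Sc := by
    rw [hScdef, mul_sub, mul_smul_comm, hPNN, hPY]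
  have hScP : Sc * P = Sc := by
    rw [hScdef, sub_mul, smul_mul_assoc, hNNP, hYP]
  have hNNsa : star NN = NN := by
    rw [hNNdef, star_sub]
    have g1 : star (P * H * P) = P * H * P := by
      have hb : P * H * P = P * H * star P := by rw [hP.star_eq]
      rw [hb]
      exact sand _ _ hH.star_eq
    have g2 : star (P * H * Q * R0 * Q * H * P) = P * H * Q * R0 * Q * H * P := by
      have hb : P * H * Q * R0 * Q * H * P = (P * H * Q) * R0 * star (P * H * Q) := by
        rw [hstar3]; noncomm_ring
      rw [hb]
      exact sand _ _ hR0sa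
    rw [g1, g2]
  have hScsa : star Sc = Sc := by
    rw [hScdef, star_sub, star_smul, hNNsa, hYsa.star_eq, Complex.star_def,
      Complex.conj_ofReal]
  -- the key Schur identity
  have hsplitHP : H * P = P * (H * P) + Q * (H * P) := by
    calc H * P = 1 * (H * P) := (one_mul _).symm
    _ = (P + Q) * (H * P) := by rw [hPplusQ]
    _ = P * (H * P) + Q * (H * P) := add_mul _ _ _
  have hGP : G * P = P * (H * P) + Q * (H * P) - ((e:ℝ):ℂ) • P + EE := by
    rw [hGdef, add_mul, sub_mul, smul_mul_assoc, one_mul, hEEP]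
    conv_lhs => rw [hsplitHP]
  have hReGP : Re * (G * P) = Re * (H * P) := by
    rw [hGP, mul_add, mul_sub, mul_add]
    rw [show Re * (P * (H * P)) = 0 from by rw [← mul_assoc, hReP, zero_mul]]
    rw [show Re * (Q * (H * P)) = Re * (H * P) from by rw [← mul_assoc, hReQ]]
    rw [mul_smul_comm, hReP, smul_zero, hReEE]
    abel
  have hQHQRe : (Q * H * Q) * Re = Q + ((e:ℝ):ℂ) • Re := by
    have hc3' : Q * H * Q = Q * De * Q + ((e:ℝ):ℂ) • Q := by rw [← c3]; abel
    rw [hc3', add_mul, he3, smul_mul_assoc, hQRe]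
  have hHReHP : H * (Re * (H * P)) = P * (H * (Re * (H * P))) + Q * (H * P)
      + ((e:ℝ):ℂ) • (Re * (H * P)) := by
    have l1 : Q * (H * (Re * (H * P))) = Q * (H * P) + ((e:ℝ):ℂ) • (Re * (H * P)) := by
      calc Q * (H * (Re * (H * P))) = Q * (H * ((Q * Re) * (H * P))) := by rw [hQRe]
      _ = ((Q * H * Q) * Re) * (H * P) := by noncomm_ring
      _ = (Q + ((e:ℝ):ℂ) • Re) * (H * P) := by rw [hQHQRe]
      _ = Q * (H * P) + ((e:ℝ):ℂ) • (Re * (H * P)) := by rw [add_mul, smul_mul_assoc]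
    calc H * (Re * (H * P)) = 1 * (H * (Re * (H * P))) := (one_mul _).symm
    _ = (P + Q) * (H * (Re * (H * P))) := by rw [hPplusQ]
    _ = P * (H * (Re * (H * P))) + Q * (H * (Re * (H * P))) := add_mul _ _ _
    _ = P * (H * (Re * (H * P))) + (Q * (H * P) + ((e:ℝ):ℂ) • (Re * (H * P))) := by rw [l1]
    _ = _ := by abel
  have hGReHP : G * (Re * (H * P)) = H * (Re * (H * P)) - ((e:ℝ):ℂ) • (Re * (H * P)) := by
    rw [hGdef, add_mul, sub_mul, smul_mul_assoc, one_mul]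
    rw [show EE * (Re * (H * P)) = 0 from by rw [← mul_assoc, hEERe, zero_mul]]
    abel
  have hexp2 : P * (H * (Re * (H * P))) = P * (H * (R0 * (H * P)))
      + ((e:ℝ):ℂ) • (P * (H * (R0 * (R0 * (H * P)))))
      + (((e:ℝ):ℂ) * ((e:ℝ):ℂ)) • (P * (H * (Re * (R0 * (R0 * (H * P)))))) := by
    calc P * (H * (Re * (H * P)))
        = P * (H * ((R0 + ((e:ℝ):ℂ) • (R0 * R0)
            + (((e:ℝ):ℂ) * ((e:ℝ):ℂ)) • (Re * (R0 * R0))) * (H * P))) := by rw [← hexp]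
    _ = _ := by
        simp only [add_mul, smul_mul_assoc, mul_add, mul_smul_comm, mul_assoc]
  have hNN1 : P * H * Q * R0 * Q * H * P = P * (H * (R0 * (H * P))) := by
    have h01' : Q * R0 * Q = R0 := h01.symm
    calc P * H * Q * R0 * Q * H * P = P * (H * ((Q * R0 * Q) * (H * P))) := by noncomm_ring
    _ = P * (H * (R0 * (H * P))) := by rw [h01']
  have hQRR : Q * (R0 * R0) = R0 * R0 := by
    calc Q * (R0 * R0) = (Q * R0) * R0 := by rw [← mul_assoc]
    _ = R0 * R0 := by rw [hQR0]
  have hRRQ : (R0 * R0) * Q = R0 * R0 := by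
    calc (R0 * R0) * Q = R0 * (R0 * Q) := by rw [mul_assoc]
    _ = R0 * R0 := by rw [hR0Q]
  have hYB : P * H * Q * (R0 * R0) * Q * H * P = P * (H * (R0 * (R0 * (H * P)))) := by
    calc P * H * Q * (R0 * R0) * Q * H * P
        = P * (H * ((Q * (R0 * R0)) * (Q * (H * P)))) := by noncomm_ring
    _ = P * (H * ((R0 * R0) * (Q * (H * P)))) := by rw [hQRR]
    _ = P * (H * (((R0 * R0) * Q) * (H * P))) := by noncomm_ring
    _ = P * (H * ((R0 * R0) * (H * P))) := by rw [hRRQ]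
    _ = P * (H * (R0 * (R0 * (H * P)))) := by rw [mul_assoc]
  have lemA : G * (P - Re * (G * P)) = Sc := by
    rw [mul_sub, hReGP, hGReHP, hHReHP, hGP, hexp2, hScdef, hNNdef, hYdef, hNN1, hYB,
      hEEdef]
    have hPHP : P * H * P = P * (H * P) := by noncomm_ring
    rw [hPHP]
    module
  have lemA' : (P - (P * G) * Re) * G = Sc := by
    have hst := congrArg star lemA
    rw [star_mul, hScsa, star_sub, hP.star_eq, star_mul, star_mul, hResa, hGsa,
      hP.star_eq] at hst
    exact hst
  -- the K-inverse of Sc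
  have hW1 : (P * Gi * P) * Sc = P := by
    have hX : Gi * (G * (P - Re * (G * P))) = P - Re * (G * P) := by
      rw [← mul_assoc, hGi2, one_mul]
    calc (P * Gi * P) * Sc = (P * Gi) * (P * Sc) := by noncomm_ring
    _ = (P * Gi) * Sc := by rw [hPSc]
    _ = P * (Gi * Sc) := by noncomm_ring
    _ = P * (Gi * (G * (P - Re * (G * P)))) := by rw [lemA]
    _ = P * (P - Re * (G * P)) := by rw [hX]
    _ = P := by
        rw [mul_sub, hP2, show P * (Re * (G * P)) = 0 from by
          rw [← mul_assoc, hPRe, zero_mul], sub_zero]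
  have hW2 : Sc * (P * Gi * P) = P := by
    have hX : ((P - (P * G) * Re) * G) * Gi = P - (P * G) * Re := by
      rw [mul_assoc, hGi1, mul_one]
    calc Sc * (P * Gi * P) = (Sc * P) * (Gi * P) := by noncomm_ring
    _ = Sc * (Gi * P) := by rw [hScP]
    _ = (Sc * Gi) * P := by noncomm_ring
    _ = (((P - (P * G) * Re) * G) * Gi) * P := by rw [lemA']
    _ = (P - (P * G) * Re) * P := by rw [hX]
    _ = P := by
        rw [sub_mul, hP2, show ((P * G) * Re) * P = 0 from by
          rw [mul_assoc, hReP, mul_zero], sub_zero]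
  -- transport to Z-dressed operator
  have hfact : Z * NN * Z - ((e:ℝ):ℂ) • P = Z * (Sc * Z) := by
    have hcal : Z * (Sc * Z) = Z * NN * Z - ((e:ℝ):ℂ) • P := by
      calc Z * (Sc * Z) = Z * ((NN - ((e:ℝ):ℂ) • Y) * Z) := by rw [hScdef]
      _ = Z * (NN * Z) - ((e:ℝ):ℂ) • (Z * (Y * Z)) := by
          rw [sub_mul, mul_sub, smul_mul_assoc, mul_smul_comm]
      _ = Z * NN * Z - ((e:ℝ):ℂ) • P := by rw [hZYZ, ← mul_assoc]
    exact hcal.symm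
  have hMWa : ((Y * Z) * ((P * Gi * P) * (Y * Z))) * (Z * NN * Z - ((e:ℝ):ℂ) • P) = P := by
    rw [hfact]
    calc ((Y * Z) * ((P * Gi * P) * (Y * Z))) * (Z * (Sc * Z))
        = (Y * Z) * ((P * Gi * P) * ((Y * (Z * Z)) * (Sc * Z))) := by noncomm_ring
    _ = (Y * Z) * ((P * Gi * P) * (P * (Sc * Z))) := by rw [hYZZ]
    _ = (Y * Z) * ((P * Gi * P) * ((P * Sc) * Z)) := by rw [← mul_assoc P Sc Z]
    _ = (Y * Z) * ((P * Gi * P) * (Sc * Z)) := by rw [hPSc]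
    _ = (Y * Z) * (((P * Gi * P) * Sc) * Z) := by noncomm_ring
    _ = (Y * Z) * (P * Z) := by rw [hW1]
    _ = (Y * Z) * Z := by rw [hPZ]
    _ = Y * (Z * Z) := by rw [mul_assoc]
    _ = P := hYZZ
  have hMWb : (Z * NN * Z - ((e:ℝ):ℂ) • P) * ((Y * Z) * ((P * Gi * P) * (Y * Z))) = P := by
    rw [hfact]
    calc (Z * (Sc * Z)) * ((Y * Z) * ((P * Gi * P) * (Y * Z)))
        = Z * ((Sc * (Z * (Y * Z))) * ((P * Gi * P) * (Y * Z))) := by noncomm_ring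
    _ = Z * ((Sc * P) * ((P * Gi * P) * (Y * Z))) := by rw [hZYZ]
    _ = Z * (Sc * ((P * Gi * P) * (Y * Z))) := by rw [hScP]
    _ = Z * ((Sc * (P * Gi * P)) * (Y * Z)) := by rw [← mul_assoc Sc]
    _ = Z * (P * (Y * Z)) := by rw [hW2]
    _ = Z * ((P * Y) * Z) := by rw [← mul_assoc P Y Z]
    _ = Z * (Y * Z) := by rw [hPY]
    _ = P := hZYZ
  set W2 : 𝓗 →L[ℂ] 𝓗 := (Y * Z) * ((P * Gi * P) * (Y * Z)) with hW2def
  have hPW2 : P * W2 = W2 := by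
    rw [hW2def]
    calc P * ((Y * Z) * ((P * Gi * P) * (Y * Z)))
        = ((P * Y) * Z) * ((P * Gi * P) * (Y * Z)) := by noncomm_ring
    _ = (Y * Z) * ((P * Gi * P) * (Y * Z)) := by rw [hPY]
  have hPW2v : ∀ v : 𝓗, P (W2 v) = W2 v := by
    intro v
    rw [← ContinuousLinearMap.mul_apply, hPW2]
  have hmem : ∀ x : K, (-W2) ((x : 𝓗)) ∈ K := by
    intro x
    rw [hK]
    have h1 : (-W2) ((x : 𝓗)) = -(W2 (x : 𝓗)) := rfl
    rw [h1, map_neg, hPW2v]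
  set Wk : K →L[ℂ] K :=
    ContinuousLinearMap.codRestrict ((-W2).comp K.subtypeL) K (fun x => hmem x) with hWkdef
  have hWkx : ∀ y : K, ((Wk y : K) : 𝓗) = -(W2 (y : 𝓗)) := by
    intro y
    rw [hWkdef]
    rfl
  have hunit : IsUnit (algebraMap ℂ (K →L[ℂ] K) ((e:ℝ):ℂ) - Ht) := by
    refine ⟨⟨algebraMap ℂ (K →L[ℂ] K) ((e:ℝ):ℂ) - Ht, Wk, ?_, ?_⟩, rfl⟩
    · ext x
      have hPx : P (x : 𝓗) = (x : 𝓗) := (hK _).mp x.2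
      have happ : ((Z * NN * Z - ((e:ℝ):ℂ) • P) * W2) ((x : 𝓗)) = P ((x : 𝓗)) := by
        rw [hMWb]
      simp only [ContinuousLinearMap.mul_apply, ContinuousLinearMap.sub_apply,
        ContinuousLinearMap.smul_apply] at happ
      rw [hPW2v, hPx] at happ
      rw [ContinuousLinearMap.mul_apply, ContinuousLinearMap.one_apply]
      rw [Algebra.algebraMap_eq_smul_one]
      rw [ContinuousLinearMap.sub_apply, ContinuousLinearMap.smul_apply,
        ContinuousLinearMap.one_apply]
      rw [Submodule.coe_sub, Submodule.coe_smul]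
      rw [hHt (Wk x), hWkx x]
      rw [map_neg, smul_neg]
      rw [sub_neg_eq_add, neg_add_eq_sub]
      exact happ
    · ext x
      have hPx : P (x : 𝓗) = (x : 𝓗) := (hK _).mp x.2
      have happ : (W2 * (Z * NN * Z - ((e:ℝ):ℂ) • P)) ((x : 𝓗)) = P ((x : 𝓗)) := by
        rw [hMWa]
      simp only [ContinuousLinearMap.mul_apply, ContinuousLinearMap.sub_apply,
        ContinuousLinearMap.smul_apply] at happ
      rw [hPx] at happ
      rw [map_sub, map_smul] at happ
      rw [ContinuousLinearMap.mul_apply, ContinuousLinearMap.one_apply]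
      rw [hWkx]
      have hcoe : (((algebraMap ℂ (K →L[ℂ] K) ((e:ℝ):ℂ) - Ht) x : K) : 𝓗)
          = ((e:ℝ):ℂ) • (x : 𝓗) - (Z * NN * Z) ((x : 𝓗)) := by
        rw [Algebra.algebraMap_eq_smul_one]
        rw [ContinuousLinearMap.sub_apply, ContinuousLinearMap.smul_apply,
          ContinuousLinearMap.one_apply]
        rw [Submodule.coe_sub, Submodule.coe_smul, hHt]
      rw [hcoe, map_sub, map_smul]
      rw [neg_sub]
      exact happ
  exact spectrum.mem_iff.mp hespec hunit
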